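/- arXiv:math/0311213 — 3 statements merged into one kernel-verified Lean document; each statement's English description precedes it below -/
import Mathlib

section
/- Decomposition rule on monomials: for θ > 0, a ∈ ℝ, ω ∈ ℝ \ {0}, and m ∈ ℕ, the limit as n → ∞ of ( exp((a/n)Δ_θ) ∘ exp((aω/n) zD) )^n applied to z^m (each exponential acting as a finite sum on polynomials) equals Σ_{k=0}^m (ω^{-1}(e^{aω}−1))^k / k! · (γ_θ(m)/γ_θ(m−k)) · (e^{aω} z)^{m−k}, i.e., it equals exp(aω zD) exp(ω^{-1}(e^{aω}−1) Δ_θ) z^m. -/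
/-- `Δ_θ f = θ f' + z f''`. -/
noncomputable def Dth (θ : ℝ) (f : ℂ → ℂ) : ℂ → ℂ :=
  fun z => (θ : ℂ) * deriv f z + z * deriv (deriv f) z

/-- `zD : f ↦ z f'`. -/
noncomputable def zD (f : ℂ → ℂ) : ℂ → ℂ := fun z => z * deriv f z

/-- `γ_θ(m) = m! Γ(θ + m)`. -/
noncomputable def gam (θ : ℝ) (m : ℕ) : ℝ := m.factorial * Real.Gamma (θ + m)

/-- `exp(c Δ_θ)` defined by the series expansion (pointwise sum). -/
noncomputable def expD (θ : ℝ) (c : ℂ) (f : ℂ → ℂ) : ℂ → ℂ :=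
  fun z => ∑' k : ℕ, c ^ k / (k.factorial : ℂ) * ((Dth θ)^[k] f z)

/-- `exp(c zD)` defined by the series expansion (pointwise sum). -/
noncomputable def expZD (c : ℂ) (f : ℂ → ℂ) : ℂ → ℂ :=
  fun z => ∑' k : ℕ, c ^ k / (k.factorial : ℂ) * (zD^[k] f z)

open Finset

noncomputable def Cc (θ : ℝ) (j i : ℕ) : ℂ :=
  if i ≤ j then ((gam θ j / gam θ (j - i) : ℝ) : ℂ) else 0

lemma gam_pos {θ : ℝ} (hθ : 0 < θ) (p : ℕ) : 0 < gam θ p := by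
  unfold gam
  have : (0:ℝ) < θ + p := by positivity
  exact mul_pos (by exact_mod_cast p.factorial_pos) (Real.Gamma_pos_of_pos this)

lemma gam_ne {θ : ℝ} (hθ : 0 < θ) (p : ℕ) : gam θ p ≠ 0 := (gam_pos hθ p).ne'

lemma gam_succ {θ : ℝ} (hθ : 0 < θ) (p : ℕ) :
    gam θ (p + 1) = ((p + 1 : ℝ) * (θ + p)) * gam θ p := by
  unfold gam
  rw [Nat.factorial_succ]
  have h1 : (θ + ((p : ℕ) + 1 : ℕ)) = (θ + p) + 1 := by push_cast; ring
  rw [h1, Real.Gamma_add_one (by positivity)]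
  push_cast
  ring

lemma Cc_zero (θ : ℝ) (j : ℕ) (h : 0 < θ) : Cc θ j 0 = 1 := by
  unfold Cc
  rw [if_pos (Nat.zero_le j)]
  simp [div_self (gam_ne h j)]

lemma Cc_eq_zero {θ : ℝ} {j i : ℕ} (h : j < i) : Cc θ j i = 0 := by
  unfold Cc; rw [if_neg (by omega)]

lemma Cc_succ {θ : ℝ} (hθ : 0 < θ) (j i : ℕ) :
    Cc θ j (i + 1) = Cc θ j i * (((j - i : ℕ) : ℂ) * ((θ : ℂ) + ((j - i : ℕ) : ℂ) - 1)) := by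
  by_cases h : i + 1 ≤ j
  · have hi : i ≤ j := by omega
    have hq : j - i = (j - (i+1)) + 1 := by omega
    set q := j - (i + 1) with hqd
    unfold Cc
    rw [if_pos h, if_pos hi, hq]
    have hX : ((q : ℝ) + 1) * (θ + q) ≠ 0 := by positivity
    have key : (gam θ j / gam θ q) = (gam θ j / gam θ (q + 1)) * ((q + 1 : ℝ) * (θ + q)) := by
      rw [gam_succ hθ q]
      field_simp
    rw [key]
    push_cast
    ring
  · have h0 : j - i = 0 := by omega
    rw [Cc_eq_zero (by omega : j < i + 1), h0]
    simp

lemma hasDerivAt_poly (s : Finset ℕ) (B : ℕ → ℂ) (e : ℕ → ℕ) (z : ℂ) :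
    HasDerivAt (fun z : ℂ => ∑ k ∈ s, B k * z ^ e k)
      (∑ k ∈ s, B k * (e k : ℂ) * z ^ (e k - 1)) z := by
  apply HasDerivAt.fun_sum
  intro k _
  simpa [mul_assoc] using (hasDerivAt_pow (e k) z).const_mul (B k)

lemma deriv_poly (s : Finset ℕ) (B : ℕ → ℂ) (e : ℕ → ℕ) :
    deriv (fun z : ℂ => ∑ k ∈ s, B k * z ^ e k)
      = fun z => ∑ k ∈ s, B k * (e k : ℂ) * z ^ (e k - 1) :=
  funext fun z => (hasDerivAt_poly s B e z).deriv

lemma Dth_poly (θ : ℝ) (s : Finset ℕ) (B : ℕ → ℂ) (e : ℕ → ℕ) :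
    Dth θ (fun z : ℂ => ∑ k ∈ s, B k * z ^ e k)
      = fun z => ∑ k ∈ s, (B k * (((e k : ℂ)) * ((θ : ℂ) + (e k : ℂ) - 1))) * z ^ (e k - 1) := by
  funext z
  show (θ : ℂ) * deriv _ z + z * deriv (deriv _) z = _
  rw [deriv_poly s B e, deriv_poly s (fun k => B k * (e k : ℂ)) (fun k => e k - 1)]
  rw [Finset.mul_sum, Finset.mul_sum, ← Finset.sum_add_distrib]
  refine Finset.sum_congr rfl fun k _ => ?_
  rcases hek : e k with _ | p
  · simp
  · rcases p with _ | p
    · push_cast; ring_nf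
    · simp only [Nat.add_sub_cancel]
      push_cast
      ring

lemma Dth_iter (θ : ℝ) (hθ : 0 < θ) (s : Finset ℕ) (B : ℕ → ℂ) (e : ℕ → ℕ) :
    ∀ i, (Dth θ)^[i] (fun z : ℂ => ∑ k ∈ s, B k * z ^ e k)
      = fun z => ∑ k ∈ s, B k * Cc θ (e k) i * z ^ (e k - i)
  | 0 => by
      funext z; simp [Cc_zero θ _ hθ]
  | (i + 1) => by
      rw [Function.iterate_succ_apply', Dth_iter θ hθ s B e i]
      rw [show (fun z : ℂ => ∑ k ∈ s, B k * Cc θ (e k) i * z ^ (e k - i))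
            = (fun z : ℂ => ∑ k ∈ s, (fun k => B k * Cc θ (e k) i) k * z ^ ((fun k => e k - i) k)) from rfl]
      rw [Dth_poly θ s (fun k => B k * Cc θ (e k) i) (fun k => e k - i)]
      funext z
      refine Finset.sum_congr rfl fun k _ => ?_
      rw [Cc_succ hθ (e k) i, Nat.sub_sub]
      ring

lemma expD_poly (θ : ℝ) (hθ : 0 < θ) (c : ℂ) (s : Finset ℕ) (B : ℕ → ℂ) (e : ℕ → ℕ) :
    expD θ c (fun z : ℂ => ∑ k ∈ s, B k * z ^ e k)
      = fun z => ∑ k ∈ s, ∑ i ∈ range (e k + 1),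
          B k * (c ^ i / (i.factorial : ℂ)) * Cc θ (e k) i * z ^ (e k - i) := by
  funext z
  show (∑' i : ℕ, c ^ i / (i.factorial : ℂ) * ((Dth θ)^[i] _ z)) = _
  have h1 : ∀ i : ℕ, (Dth θ)^[i] (fun z : ℂ => ∑ k ∈ s, B k * z ^ e k) z
      = ∑ k ∈ s, B k * Cc θ (e k) i * z ^ (e k - i) :=
    fun i => congrFun (Dth_iter θ hθ s B e i) z
  calc (∑' i : ℕ, c ^ i / (i.factorial : ℂ) * ((Dth θ)^[i] (fun z : ℂ => ∑ k ∈ s, B k * z ^ e k) z))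
      = ∑' i : ℕ, ∑ k ∈ s,
          c ^ i / (i.factorial : ℂ) * (B k * Cc θ (e k) i * z ^ (e k - i)) := by
        exact tsum_congr fun i => by rw [h1 i, Finset.mul_sum]
    _ = ∑ k ∈ s, ∑' i : ℕ,
          c ^ i / (i.factorial : ℂ) * (B k * Cc θ (e k) i * z ^ (e k - i)) := by
        refine Summable.tsum_finsetSum fun k _ => summable_of_ne_finset_zero (s := range (e k + 1)) ?_
        intro i hi
        rw [Cc_eq_zero (by simpa using hi : e k < i)]
        ring
    _ = ∑ k ∈ s, ∑ i ∈ range (e k + 1),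
          B k * (c ^ i / (i.factorial : ℂ)) * Cc θ (e k) i * z ^ (e k - i) := by
        refine Finset.sum_congr rfl fun k _ => ?_
        rw [tsum_eq_sum (s := range (e k + 1))
          (fun i hi => by rw [Cc_eq_zero (by simpa using hi : e k < i)]; ring)]
        exact Finset.sum_congr rfl fun i _ => by ring

lemma zD_poly (s : Finset ℕ) (B : ℕ → ℂ) (e : ℕ → ℕ) :
    zD (fun z : ℂ => ∑ k ∈ s, B k * z ^ e k)
      = fun z => ∑ k ∈ s, ((e k : ℂ) * B k) * z ^ e k := by
  funext z
  show z * deriv _ z = _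
  rw [deriv_poly s B e, Finset.mul_sum]
  refine Finset.sum_congr rfl fun k _ => ?_
  rcases e k with _ | p
  · simp
  · simp only [Nat.add_sub_cancel]
    push_cast
    ring

lemma zD_iter (s : Finset ℕ) (B : ℕ → ℂ) (e : ℕ → ℕ) :
    ∀ i, zD^[i] (fun z : ℂ => ∑ k ∈ s, B k * z ^ e k)
      = fun z => ∑ k ∈ s, ((e k : ℂ) ^ i * B k) * z ^ e k
  | 0 => by funext z; simp
  | (i + 1) => by
      rw [Function.iterate_succ_apply', zD_iter s B e i]
      rw [show (fun z : ℂ => ∑ k ∈ s, ((e k : ℂ) ^ i * B k) * z ^ e k)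
            = (fun z : ℂ => ∑ k ∈ s, (fun k => (e k : ℂ) ^ i * B k) k * z ^ ((fun k => e k) k)) from rfl]
      rw [zD_poly s (fun k => (e k : ℂ) ^ i * B k) e]
      funext z
      exact Finset.sum_congr rfl fun k _ => by ring

lemma expZD_poly (c0 : ℂ) (s : Finset ℕ) (B : ℕ → ℂ) (e : ℕ → ℕ) :
    expZD c0 (fun z : ℂ => ∑ k ∈ s, B k * z ^ e k)
      = fun z => ∑ k ∈ s, Complex.exp (c0 * (e k : ℂ)) * B k * z ^ e k := by
  funext z
  show (∑' i : ℕ, c0 ^ i / (i.factorial : ℂ) * (zD^[i] _ z)) = _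
  calc (∑' i : ℕ, c0 ^ i / (i.factorial : ℂ) * (zD^[i] (fun z : ℂ => ∑ k ∈ s, B k * z ^ e k) z))
      = ∑' i : ℕ, ∑ k ∈ s,
          (c0 * (e k : ℂ)) ^ i / (i.factorial : ℂ) * (B k * z ^ e k) := by
        refine tsum_congr fun i => ?_
        rw [congrFun (zD_iter s B e i) z, Finset.mul_sum]
        exact Finset.sum_congr rfl fun k _ => by rw [mul_pow]; ring
    _ = ∑ k ∈ s, ∑' i : ℕ,
          (c0 * (e k : ℂ)) ^ i / (i.factorial : ℂ) * (B k * z ^ e k) := by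
        refine Summable.tsum_finsetSum fun k _ => ?_
        exact (NormedSpace.expSeries_div_summable (c0 * (e k : ℂ))).mul_right _
    _ = ∑ k ∈ s, Complex.exp (c0 * (e k : ℂ)) * B k * z ^ e k := by
        refine Finset.sum_congr rfl fun k _ => ?_
        rw [tsum_mul_right, Complex.exp_eq_exp_ℂ, NormedSpace.exp_eq_tsum_div]
        ring

/-- The family of polynomial functions arising in the computation. -/
noncomputable def Fm (θ : ℝ) (m : ℕ) (u v : ℂ) : ℂ → ℂ :=
  fun z => ∑ k ∈ range (m + 1),
    (u ^ k / (k.factorial : ℂ) * ((gam θ m / gam θ (m - k) : ℝ) : ℂ) * v ^ (m - k)) * z ^ (m - k)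

lemma Fm_base (θ : ℝ) (hθ : 0 < θ) (m : ℕ) : Fm θ m 0 1 = fun w : ℂ => w ^ m := by
  funext z
  unfold Fm
  rw [Finset.sum_eq_single 0]
  · simp [div_self (gam_ne hθ m)]
  · intro k _ hk
    simp [zero_pow hk]
  · intro h
    simp at h

lemma expZD_Fm (θ : ℝ) (m : ℕ) (c0 u v : ℂ) :
    expZD c0 (Fm θ m u v) = Fm θ m u (v * Complex.exp c0) := by
  unfold Fm
  rw [expZD_poly c0 (range (m + 1))
    (fun k => u ^ k / (k.factorial : ℂ) * ((gam θ m / gam θ (m - k) : ℝ) : ℂ) * v ^ (m - k))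
    (fun k => m - k)]
  funext z
  refine Finset.sum_congr rfl fun k _ => ?_
  rw [mul_pow, mul_comm c0, Complex.exp_nat_mul]
  ring

lemma tri_sum (M : ℕ) (f : ℕ → ℕ → ℂ)
    (hf : ∀ k i, k ≤ M → M < k + i → f k i = 0) :
    ∑ k ∈ range (M + 1), ∑ i ∈ range (M + 1), f k i
      = ∑ j ∈ range (M + 1), ∑ k ∈ range (j + 1), f k (j - k) := by
  rw [Finset.sum_range_diag_flip (M + 1) f]
  refine Finset.sum_congr rfl fun k hk => ?_
  have hkM : k ≤ M := by simpa [Nat.lt_succ_iff] using hk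
  refine (Finset.sum_subset ?_ ?_).symm
  · intro i hi
    simp only [Finset.mem_range] at hi ⊢
    omega
  · intro i _ hi
    simp only [Finset.mem_range] at hi
    exact hf k i hkM (by omega)

set_option maxHeartbeats 1000000 in
lemma expD_Fm (θ : ℝ) (hθ : 0 < θ) (m : ℕ) (c u v : ℂ) :
    expD θ c (Fm θ m u v) = Fm θ m (u + c * v) v := by
  unfold Fm
  rw [expD_poly θ hθ c (range (m + 1))
    (fun k => u ^ k / (k.factorial : ℂ) * ((gam θ m / gam θ (m - k) : ℝ) : ℂ) * v ^ (m - k))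
    (fun k => m - k)]
  funext z
  -- extend inner sums to range (m+1)
  have hext : ∀ k ∈ range (m + 1),
      (∑ i ∈ range ((m - k) + 1),
        (u ^ k / (k.factorial : ℂ) * ((gam θ m / gam θ (m - k) : ℝ) : ℂ) * v ^ (m - k))
          * (c ^ i / (i.factorial : ℂ)) * Cc θ (m - k) i * z ^ (m - k - i))
      = ∑ i ∈ range (m + 1),
        (u ^ k / (k.factorial : ℂ) * ((gam θ m / gam θ (m - k) : ℝ) : ℂ) * v ^ (m - k))
          * (c ^ i / (i.factorial : ℂ)) * Cc θ (m - k) i * z ^ (m - k - i) := by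
    intro k hk
    refine Finset.sum_subset ?_ ?_
    · intro i hi
      simp only [Finset.mem_range] at hi ⊢
      omega
    · intro i _ hi
      simp only [Finset.mem_range] at hi
      rw [Cc_eq_zero (by omega : m - k < i)]
      ring
  rw [Finset.sum_congr rfl hext]
  rw [tri_sum m (fun k i =>
      (u ^ k / (k.factorial : ℂ) * ((gam θ m / gam θ (m - k) : ℝ) : ℂ) * v ^ (m - k))
        * (c ^ i / (i.factorial : ℂ)) * Cc θ (m - k) i * z ^ (m - k - i))
    (fun k i hk hki => by beta_reduce; rw [Cc_eq_zero (by omega : m - k < i)]; ring)]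
  refine Finset.sum_congr rfl fun j hj => ?_
  have hjm : j ≤ m := by simpa [Nat.lt_succ_iff] using hj
  -- binomial expansion of (u + c*v)^j
  rw [add_pow]
  rw [Finset.sum_div, Finset.sum_mul, Finset.sum_mul, Finset.sum_mul]
  refine Finset.sum_congr rfl fun k hk => ?_
  have hkj : k ≤ j := by simpa [Nat.lt_succ_iff] using hk
  have h1 : m - k - (j - k) = m - j := by omega
  have h2 : Cc θ (m - k) (j - k) = ((gam θ (m - k) / gam θ (m - j) : ℝ) : ℂ) := by
    unfold Cc
    rw [if_pos (by omega : j - k ≤ m - k), h1]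
  have h3 : v ^ (m - k) = v ^ (m - j) * v ^ (j - k) := by
    rw [← pow_add]
    congr 1
    omega
  have hfac : ((j.choose k : ℂ)) * (k.factorial : ℂ) * ((j - k).factorial : ℂ)
      = (j.factorial : ℂ) := by
    exact_mod_cast congrArg (Nat.cast (R := ℂ)) (Nat.choose_mul_factorial_mul_factorial hkj)
  have hgam : ((gam θ m / gam θ (m - k) : ℝ) : ℂ) * ((gam θ (m - k) / gam θ (m - j) : ℝ) : ℂ)
      = ((gam θ m / gam θ (m - j) : ℝ) : ℂ) := by
    rw [← Complex.ofReal_mul]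
    congr 1
    field_simp
    rw [mul_comm (gam θ m) (gam θ (m - k)), mul_div_mul_left _ _ (gam_ne hθ (m - k))]
  rw [h1, h2, h3]
  have hk0 : (k.factorial : ℂ) ≠ 0 := by exact_mod_cast k.factorial_ne_zero
  have hjk0 : ((j - k).factorial : ℂ) ≠ 0 := by exact_mod_cast (j - k).factorial_ne_zero
  have hj0 : (j.factorial : ℂ) ≠ 0 := by exact_mod_cast j.factorial_ne_zero
  rw [← hgam, mul_pow]
  have hch : (j.choose k : ℂ) ≠ 0 := by exact_mod_cast (Nat.choose_pos hkj).ne'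
  rw [← hfac]
  have hg1 : ((gam θ (m - k) : ℝ) : ℂ) ≠ 0 := Complex.ofReal_ne_zero.mpr (gam_ne hθ _)
  have hg2 : ((gam θ (m - j) : ℝ) : ℂ) ≠ 0 := Complex.ofReal_ne_zero.mpr (gam_ne hθ _)
  field_simp

lemma Fm_eval (θ : ℝ) (m : ℕ) (u v z : ℂ) :
    Fm θ m u v z = ∑ k ∈ range (m + 1),
      u ^ k / (k.factorial : ℂ) * ((gam θ m / gam θ (m - k) : ℝ) : ℂ) * (v * z) ^ (m - k) :=
  Finset.sum_congr rfl fun k _ => by rw [mul_pow]; ring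

lemma iter_formula (θ : ℝ) (hθ : 0 < θ) (m : ℕ) (c s0 : ℂ) :
    ∀ N, (expD θ c ∘ expZD s0)^[N] (fun w : ℂ => w ^ m)
      = Fm θ m (c * ∑ j ∈ range N, Complex.exp s0 ^ (j + 1)) (Complex.exp s0 ^ N)
  | 0 => by
      simpa using (Fm_base θ hθ m).symm
  | (N + 1) => by
      rw [Function.iterate_succ_apply', iter_formula θ hθ m c s0 N]
      show expD θ c (expZD s0 (Fm θ m _ _)) = _
      rw [expZD_Fm, expD_Fm θ hθ]
      rw [Finset.sum_range_succ, mul_add, pow_succ]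

theorem stmt4 (θ a ω : ℝ) (hθ : 0 < θ) (hω : ω ≠ 0) (m : ℕ) (hm : 1 ≤ m) (z : ℂ) :
    Filter.Tendsto
      (fun n : ℕ => ((expD θ ((a : ℂ) / n) ∘ expZD ((a * ω : ℝ) / n))^[n]
        (fun w => w ^ m)) z)
      Filter.atTop
      (nhds (∑ k ∈ Finset.range (m + 1),
        (((Real.exp (a * ω) - 1) / ω : ℝ) : ℂ) ^ k / (k.factorial : ℂ) *
          ((gam θ m / gam θ (m - k) : ℝ) : ℂ) * (((Real.exp (a * ω) : ℝ) : ℂ) * z) ^ (m - k)))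
    ∧
    (∑ k ∈ Finset.range (m + 1),
        (((Real.exp (a * ω) - 1) / ω : ℝ) : ℂ) ^ k / (k.factorial : ℂ) *
          ((gam θ m / gam θ (m - k) : ℝ) : ℂ) * (((Real.exp (a * ω) : ℝ) : ℂ) * z) ^ (m - k))
      = expZD ((a * ω : ℝ) : ℂ)
          (expD θ ((((Real.exp (a * ω) - 1) / ω : ℝ)) : ℂ) (fun w => w ^ m)) z := by
  set E : ℂ := ((Real.exp (a * ω) : ℝ) : ℂ) with hE
  set Cs : ℂ := (((Real.exp (a * ω) - 1) / ω : ℝ) : ℂ) with hCs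
  have h2 : (∑ k ∈ Finset.range (m + 1),
        Cs ^ k / (k.factorial : ℂ) * ((gam θ m / gam θ (m - k) : ℝ) : ℂ) * (E * z) ^ (m - k))
      = expZD ((a * ω : ℝ) : ℂ) (expD θ Cs (fun w => w ^ m)) z := by
    conv_rhs => rw [← Fm_base θ hθ m]
    rw [expD_Fm θ hθ, expZD_Fm]
    rw [show (0 : ℂ) + Cs * 1 = Cs by ring,
      show (1 : ℂ) * Complex.exp ((a * ω : ℝ) : ℂ) = E by rw [one_mul, ← Complex.ofReal_exp]]
    exact (Fm_eval θ m Cs E z).symm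
  refine ⟨?_, h2⟩
  -- the limit statement
  set U : ℕ → ℂ := fun n => ((a : ℂ) / n) * ∑ j ∈ range n,
    Complex.exp (((a * ω : ℝ) : ℂ) / n) ^ (j + 1) with hU_def
  have hev : (fun n : ℕ => ((expD θ ((a : ℂ) / n) ∘ expZD ((a * ω : ℝ) / n))^[n]
      (fun w => w ^ m)) z) =ᶠ[Filter.atTop] fun n => Fm θ m (U n) E z := by
    filter_upwards [Filter.eventually_ge_atTop 1] with n hn
    have hn0 : (n : ℂ) ≠ 0 := Nat.cast_ne_zero.mpr (by omega)
    rw [congrFun (iter_formula θ hθ m ((a : ℂ) / n) (((a * ω : ℝ) : ℂ) / n) n) z]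
    have hxn : Complex.exp (((a * ω : ℝ) : ℂ) / n) ^ n = E := by
      rw [← Complex.exp_nat_mul,
        show (n : ℂ) * (((a * ω : ℝ) : ℂ) / n) = ((a * ω : ℝ) : ℂ) by field_simp,
        ← Complex.ofReal_exp]
    rw [hxn]
  have hU : Filter.Tendsto U Filter.atTop (nhds Cs) := by
    by_cases ha : a = 0
    · have hU0 : U = fun _ => 0 := by
        funext n; simp [hU_def, ha]
      have hCs0 : Cs = 0 := by
        simp [hCs, ha, Real.exp_zero]
      rw [hU0, hCs0]
      exact tendsto_const_nhds
    · have ht : a * ω ≠ 0 := mul_ne_zero ha hω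
      have htC : ((a * ω : ℝ) : ℂ) ≠ 0 := Complex.ofReal_ne_zero.mpr ht
      set h : ℕ → ℂ := fun n => ((a * ω : ℝ) : ℂ) / n with hh_def
      set x : ℕ → ℂ := fun n => Complex.exp (h n) with hx_def
      have hh0 : Filter.Tendsto h Filter.atTop (nhds 0) := by
        have h1 : Filter.Tendsto (fun n : ℕ => ((a * ω / n : ℝ) : ℂ)) Filter.atTop
            (nhds (((0 : ℝ) : ℂ))) :=
          (Complex.continuous_ofReal.tendsto 0).comp
            (tendsto_const_div_atTop_nhds_zero_nat (a * ω))
        have h2 : Filter.Tendsto (fun n : ℕ => ((a * ω / n : ℝ) : ℂ)) Filter.atTop (nhds 0) := by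
          simpa using h1
        refine h2.congr fun n => ?_
        show ((a * ω / n : ℝ) : ℂ) = h n
        simp only [hh_def]
        push_cast
        ring
      have hhW : Filter.Tendsto h Filter.atTop (nhdsWithin 0 {(0 : ℂ)}ᶜ) := by
        refine tendsto_nhdsWithin_of_tendsto_nhds_of_eventually_within _ hh0 ?_
        filter_upwards [Filter.eventually_ge_atTop 1] with n hn
        have hn0 : (n : ℂ) ≠ 0 := Nat.cast_ne_zero.mpr (by omega)
        simp [hh_def, div_eq_zero_iff, htC, hn0]
        exact ⟨ha, hω⟩
      have hslope : Filter.Tendsto (fun n => (Complex.exp (h n) - 1) / h n)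
          Filter.atTop (nhds 1) := by
        have hd := hasDerivAt_iff_tendsto_slope.mp (Complex.hasDerivAt_exp 0)
        rw [Complex.exp_zero] at hd
        have h3 := hd.comp hhW
        refine h3.congr fun n => ?_
        simp [Function.comp, slope_def_field, Complex.exp_zero]
      have haC : (a : ℂ) ≠ 0 := Complex.ofReal_ne_zero.mpr ha
      have hωC : (ω : ℂ) ≠ 0 := Complex.ofReal_ne_zero.mpr hω
      have hden : Filter.Tendsto (fun n : ℕ => (n : ℂ) * (x n - 1)) Filter.atTop
          (nhds (((a * ω : ℝ) : ℂ))) := by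
        have h1 : Filter.Tendsto (fun n => ((a * ω : ℝ) : ℂ) * ((Complex.exp (h n) - 1) / h n))
            Filter.atTop (nhds (((a * ω : ℝ) : ℂ) * 1)) := tendsto_const_nhds.mul hslope
        rw [mul_one] at h1
        refine h1.congr' ?_
        filter_upwards [Filter.eventually_ge_atTop 1] with n hn
        have hn0 : (n : ℂ) ≠ 0 := Nat.cast_ne_zero.mpr (by omega)
        rw [hx_def]
        simp only [hh_def]
        field_simp
      have hx1 : Filter.Tendsto x Filter.atTop (nhds 1) := by
        have h1 := (Complex.continuous_exp.tendsto 0).comp hh0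
        simpa [hx_def, Function.comp_def, Complex.exp_zero] using h1
      have hnum : Filter.Tendsto (fun n => (a : ℂ) * (E - 1) * x n) Filter.atTop
          (nhds ((a : ℂ) * (E - 1) * 1)) := tendsto_const_nhds.mul hx1
      have hUlim := hnum.div hden htC
      have hfinal : (a : ℂ) * (E - 1) * 1 / ((a * ω : ℝ) : ℂ) = Cs := by
        rw [hCs, hE]
        push_cast
        field_simp
      rw [hfinal] at hUlim
      refine hUlim.congr' ?_
      filter_upwards [Filter.eventually_ge_atTop 1] with n hn
      have hn0 : (n : ℂ) ≠ 0 := Nat.cast_ne_zero.mpr (by omega)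
      have hhr : h n = ((a * ω / n : ℝ) : ℂ) := by
        simp only [hh_def]; push_cast; ring
      have hxr : x n = ((Real.exp (a * ω / n) : ℝ) : ℂ) := by
        rw [hx_def]; simp only [hhr, Complex.ofReal_exp]
      have hxne1 : x n ≠ 1 := by
        rw [hxr]
        intro hcon
        rw [show (1 : ℂ) = ((1 : ℝ) : ℂ) by norm_num] at hcon
        have := Complex.ofReal_injective hcon
        rw [Real.exp_eq_one_iff] at this
        have hn0' : (n : ℝ) ≠ 0 := Nat.cast_ne_zero.mpr (by omega)
        exact ht (by simpa [hn0'] using this)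
      have hxnE : x n ^ n = E := by
        rw [hx_def, ← Complex.exp_nat_mul, hh_def,
          show (n : ℂ) * (((a * ω : ℝ) : ℂ) / n) = ((a * ω : ℝ) : ℂ) by field_simp,
          ← Complex.ofReal_exp]
      -- closed form of the geometric sum
      have hgeo : ∑ j ∈ range n, x n ^ (j + 1) = x n * ((E - 1) / (x n - 1)) := by
        have : ∑ j ∈ range n, x n ^ (j + 1) = x n * ∑ j ∈ range n, x n ^ j := by
          rw [Finset.mul_sum]
          exact Finset.sum_congr rfl fun j _ => by rw [pow_succ']
        rw [this, geom_sum_eq hxne1, hxnE]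
      show (a : ℂ) * (E - 1) * x n / ((n : ℂ) * (x n - 1)) = U n
      rw [hU_def]
      simp only
      rw [show Complex.exp (((a * ω : ℝ) : ℂ) / n) = x n from rfl, hgeo]
      have hxne1' : x n - 1 ≠ 0 := sub_ne_zero.mpr hxne1
      field_simp
  have hcont : Continuous fun u : ℂ => Fm θ m u E z := by
    unfold Fm
    refine continuous_finset_sum _ fun k _ => ?_
    exact ((((continuous_pow k).div_const _).mul continuous_const).mul continuous_const).mul
      continuous_const
  have hT : Filter.Tendsto (fun n => Fm θ m (U n) E z) Filter.atTop
      (nhds (Fm θ m Cs E z)) := (hcont.tendsto Cs).comp hU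
  have hfin := hT.congr' hev.symm
  rwa [Fm_eval θ m Cs E z] at hfin
end

section
/- For θ > 0, a > 0, and m ∈ ℕ₀, the integral representation holds: e^{−z/a} ∫_0^∞ w_θ(sz/a) (as)^m s^{θ−1} e^{−s} ds = Σ_{k=0}^m (a^k/k!) (γ_θ(m)/γ_θ(m−k)) z^{m−k} = (exp(aΔ_θ) z^m), where w_θ(ξ) = Σ_{k=0}^∞ ξ^k / (k! Γ(θ+k)) and γ_θ(m) = m! Γ(θ+m). -/
/-- `w_θ(ξ) = Σ_k ξ^k / (k! Γ(θ+k))`. -/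
noncomputable def wth (θ : ℝ) (ξ : ℂ) : ℂ :=
  ∑' k : ℕ, ξ ^ k / ((k.factorial : ℂ) * ((Real.Gamma (θ + k) : ℝ) : ℂ))

open Finset

noncomputable def pfun (t : ℝ) (m : ℕ) : ℝ := ∏ i ∈ Finset.range m, (t + i)

lemma pfun_succ (t : ℝ) (m : ℕ) : pfun t (m+1) = pfun t m * (t + m) := by
  simp [pfun, Finset.prod_range_succ]

lemma pfun_succ' (t : ℝ) (m : ℕ) : pfun t (m+1) = t * pfun (t+1) m := by
  rw [pfun, Finset.prod_range_succ']
  simp only [Nat.cast_zero, add_zero, mul_comm]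
  congr 1
  · unfold pfun
    exact Finset.prod_congr rfl fun i _ => by push_cast; ring

lemma pfun_diff (u : ℝ) (r : ℕ) :
    pfun (u+1) r - pfun u r = r * pfun (u+1) (r-1) := by
  cases r with
  | zero => simp [pfun]
  | succ r =>
    rw [pfun_succ, pfun_succ' u r, Nat.succ_sub_one]
    push_cast
    ring

lemma Gamma_pfun {t : ℝ} (ht : 0 < t) (m : ℕ) :
    Real.Gamma (t + m) = pfun t m * Real.Gamma t := by
  induction m with
  | zero => simp [pfun]
  | succ m ih =>
    have h1 : t + ((m : ℝ) + 1) = (t + m) + 1 := by ring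
    push_cast
    rw [h1, Real.Gamma_add_one (by positivity), ih, pfun_succ]
    ring

lemma key_sum (m : ℕ) : ∀ (n : ℕ) (t : ℝ),
    ∑ j ∈ Finset.range (n+1), (-1:ℝ)^(n+j) * (n.choose j) * pfun (t+j) m
      = n.factorial * (m.choose n) * pfun (t+n) (m-n) := by
  intro n
  induction n with
  | zero => intro t; simp
  | succ n ih =>
    intro t
    have step : ∑ j ∈ Finset.range (n+2), (-1:ℝ)^(n+1+j) * ((n+1).choose j) * pfun (t+j) m
        = (∑ j ∈ Finset.range (n+1), (-1:ℝ)^(n+j) * (n.choose j) * pfun ((t+1)+j) m)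
          - (∑ j ∈ Finset.range (n+1), (-1:ℝ)^(n+j) * (n.choose j) * pfun (t+j) m) := by
      rw [Finset.sum_range_succ' (fun j => (-1:ℝ)^(n+1+j) * ((n+1).choose j) * pfun (t+j) m) (n+1)]
      have hsplit : ∀ j, (-1:ℝ)^(n+1+(j+1)) * (((n+1).choose (j+1) : ℕ) : ℝ) * pfun (t+(j+1)) m
          = (-1:ℝ)^(n+j) * (n.choose j) * pfun ((t+1)+j) m
            + (-1:ℝ)^(n+j) * (n.choose (j+1)) * pfun (t+(j+1)) m := by
        intro j
        rw [Nat.choose_succ_succ]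
        have hpow : (-1:ℝ)^(n+1+(j+1)) = (-1:ℝ)^(n+j) := by
          have : n+1+(j+1) = (n+j) + 2 := by ring
          rw [this, pow_add]; norm_num
        have harg : t + ((j:ℝ)+1) = (t+1) + j := by ring
        push_cast
        rw [hpow, harg]
        ring
      simp only [Nat.cast_add, Nat.cast_one] at hsplit ⊢
      rw [Finset.sum_congr rfl (fun j _ => by push_cast; rw [hsplit j])]
      rw [Finset.sum_add_distrib]
      have h2 : ∑ j ∈ Finset.range (n+1), (-1:ℝ)^(n+j) * (n.choose (j+1)) * pfun (t+(j+1)) m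
            + (-1:ℝ)^(n+1+0) * (((n+1).choose 0 : ℕ):ℝ) * pfun (t+(0:ℕ)) m
          = - ∑ j ∈ Finset.range (n+1), (-1:ℝ)^(n+j) * (n.choose j) * pfun (t+j) m := by
        rw [Finset.sum_range_succ (fun j => (-1:ℝ)^(n+j) * (n.choose (j+1)) * pfun (t+(j+1)) m) n,
          Nat.choose_succ_self]
        rw [← Finset.sum_neg_distrib]
        rw [Finset.sum_range_succ' (fun j => -((-1:ℝ)^(n+j) * (n.choose j) * pfun (t+j) m)) n]
        simp only [Nat.cast_zero, add_zero, Nat.choose_zero_right, Nat.cast_one, mul_one,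
          Nat.cast_zero, Nat.cast_succ]
        congr 1
        · rw [show ((-1:ℝ)^(n+n) * 0 * pfun (t + ((n:ℝ)+1)) m) = 0 by ring, add_zero]
          apply Finset.sum_congr rfl
          intro j _
          have hpow : -(-1:ℝ)^(n+(j+1)) = (-1:ℝ)^(n+j) := by
            rw [← add_assoc, pow_succ]; ring
          push_cast
          rw [← hpow]
          ring
        · have hpow : (-1:ℝ)^(n+1) = -(-1:ℝ)^(n+0) := by rw [pow_succ]; ring
          push_cast [hpow]
          ring
      push_cast at h2 ⊢
      linarith [h2]
    rw [step, ih (t+1), ih t]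
    have harg : t + 1 + (n:ℝ) = t + (n:ℝ) + 1 := by ring
    rw [harg]
    have hdiff := pfun_diff (t+n) (m-n)
    have hchoose : (m.choose n : ℝ) * ((m - n : ℕ) : ℝ) = ((m.choose (n+1) : ℕ) : ℝ) * ((n:ℝ)+1) := by
      exact_mod_cast congrArg (Nat.cast : ℕ → ℝ) (Nat.choose_succ_right_eq m n).symm
    have hidx : m - n - 1 = m - (n+1) := by omega
    rw [hidx] at hdiff
    push_cast [Nat.factorial_succ]
    rw [show t + ((n:ℝ) + 1) = t + (n:ℝ) + 1 from by ring]
    linear_combination ((n.factorial : ℝ) * (m.choose n)) * hdiff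
      + ((n.factorial : ℝ) * pfun (t + n + 1) (m - (n+1))) * hchoose

lemma summable_aux (θ : ℝ) (hθ : 0 < θ) (m : ℕ) (r : ℝ) (hr : 0 ≤ r) :
    Summable (fun j : ℕ =>
      r ^ j * (Real.Gamma (θ + m + j) / ((j.factorial : ℝ) * Real.Gamma (θ + j)))) := by
  set f := fun j : ℕ =>
      r ^ j * (Real.Gamma (θ + m + j) / ((j.factorial : ℝ) * Real.Gamma (θ + j))) with hf
  have hpos : ∀ j : ℕ, 0 < Real.Gamma (θ + j) := fun j => Real.Gamma_pos_of_pos (by positivity)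
  have hpos2 : ∀ j : ℕ, 0 < Real.Gamma (θ + m + j) :=
    fun j => Real.Gamma_pos_of_pos (by positivity)
  have hfnn : ∀ j, 0 ≤ f j := by
    intro j
    have h1 := hpos j; have h2 := hpos2 j
    have h3 : (0:ℝ) < j.factorial := by exact_mod_cast j.factorial_pos
    simp only [hf]
    positivity
  apply summable_of_ratio_norm_eventually_le (r := 1/2) (by norm_num)
  filter_upwards [Filter.eventually_ge_atTop ⌈2*r*(θ+m)/θ⌉₊] with j hj
  have hθj : (0:ℝ) < θ + j := by positivity
  have hrec : f (j+1) = f j * (r * ((θ + m + j) / (((j:ℝ)+1) * (θ + j)))) := by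
    simp only [hf]
    push_cast [Nat.factorial_succ]
    rw [show θ + (m:ℝ) + ((j:ℝ)+1) = (θ + m + j) + 1 from by ring,
      show θ + ((j:ℝ)+1) = (θ + j) + 1 from by ring,
      Real.Gamma_add_one (by positivity), Real.Gamma_add_one (ne_of_gt hθj), pow_succ]
    have h1 := (hpos j).ne'
    have h3 : ((j.factorial : ℝ)) ≠ 0 := by exact_mod_cast j.factorial_pos.ne'
    field_simp
  have hq : r * ((θ + m + j) / (((j:ℝ)+1) * (θ + j))) ≤ 1/2 := by
    have hmono : (θ + m + j) ≤ (θ + m)/θ * (θ + j) := by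
      rw [div_mul_eq_mul_div, le_div_iff₀ hθ]
      nlinarith [Nat.cast_nonneg (α := ℝ) m, Nat.cast_nonneg (α := ℝ) j]
    have hjge : 2*r*(θ+m)/θ ≤ (j:ℝ) + 1 := by
      have h4 := Nat.le_ceil (2*r*(θ+m)/θ)
      have hj' : ((⌈2*r*(θ+m)/θ⌉₊ : ℕ) : ℝ) ≤ j := Nat.cast_le.mpr hj
      linarith
    rw [mul_div_assoc', div_le_iff₀ (by positivity)]
    have h5 : 0 ≤ (θ+m)/θ := by positivity
    have h6 : 2*r*((θ+m)/θ) ≤ (j:ℝ)+1 := by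
      calc 2*r*((θ+m)/θ) = 2*r*(θ+m)/θ := by ring
        _ ≤ (j:ℝ)+1 := hjge
    nlinarith [mul_le_mul_of_nonneg_left hmono (mul_nonneg (by norm_num : (0:ℝ) ≤ 2) hr),
      mul_le_mul_of_nonneg_right h6 hθj.le]
  rw [Real.norm_of_nonneg (hfnn _), Real.norm_of_nonneg (hfnn _), hrec]
  calc f j * (r * ((θ + m + j) / (((j:ℝ)+1) * (θ + j)))) ≤ f j * (1/2) :=
        mul_le_mul_of_nonneg_left hq (hfnn j)
    _ = 1/2 * f j := by ring

open MeasureTheory in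
lemma integral_eq (θ : ℝ) (hθ : 0 < θ) (a : ℝ) (ha : 0 < a) (m : ℕ) (x : ℂ) :
    (∫ s in Set.Ioi (0:ℝ),
        wth θ ((s:ℂ) * x) * ((a:ℂ) * (s:ℂ)) ^ m * ((s ^ (θ - 1) * Real.exp (-s) : ℝ) : ℂ))
    = ∑' j : ℕ, (x ^ j * (a:ℂ)^m / ((j.factorial : ℂ) * ((Real.Gamma (θ + j) : ℝ):ℂ)))
        * ((Real.Gamma (θ + m + j) : ℝ) : ℂ) := by
  set c : ℕ → ℂ := fun j => x ^ j * (a:ℂ)^m / ((j.factorial : ℂ) * ((Real.Gamma (θ + j) : ℝ):ℂ))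
    with hc
  set F : ℕ → ℝ → ℂ := fun j s => c j * ((s ^ (θ + m + j - 1) * Real.exp (-s) : ℝ) : ℂ) with hF
  have hconv : ∀ j : ℕ, IntegrableOn
      (fun s : ℝ => s ^ (θ + m + j - 1) * Real.exp (-s)) (Set.Ioi 0) := by
    intro j
    have h := Real.GammaIntegral_convergent (s := θ + m + j) (by positivity)
    exact h.congr_fun (fun s _ => mul_comm _ _) measurableSet_Ioi
  have hF_int : ∀ j : ℕ, Integrable (F j) (volume.restrict (Set.Ioi 0)) := by
    intro j
    exact ((hconv j).ofReal.const_mul (c j))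
  have hΓpos : ∀ j : ℕ, (0:ℝ) < Real.Gamma (θ + j) :=
    fun j => Real.Gamma_pos_of_pos (by positivity)
  have hGamma : ∀ j : ℕ, ∫ s in Set.Ioi (0:ℝ), s ^ (θ + m + j - 1) * Real.exp (-s)
      = Real.Gamma (θ + m + j) := by
    intro j
    rw [Real.Gamma_eq_integral (by positivity)]
    exact setIntegral_congr_fun measurableSet_Ioi fun s _ => mul_comm _ _
  have hnormc : ∀ j : ℕ, ‖c j‖ = ‖x‖^j * a^m / (j.factorial * Real.Gamma (θ + j)) := by
    intro j
    simp only [hc]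
    rw [norm_div, norm_mul, norm_mul, norm_pow, norm_pow]
    simp only [Complex.norm_real, Real.norm_eq_abs, Complex.norm_natCast]
    rw [abs_of_pos ha, abs_of_pos (hΓpos j)]
  have hnorm : ∀ j : ℕ, ∫ s in Set.Ioi (0:ℝ), ‖F j s‖
      = (‖x‖^j * a^m / (j.factorial * Real.Gamma (θ + j))) * Real.Gamma (θ + m + j) := by
    intro j
    have : ∀ s ∈ Set.Ioi (0:ℝ), ‖F j s‖ = ‖c j‖ * (s ^ (θ + m + j - 1) * Real.exp (-s)) := by
      intro s hs
      have hs0 : (0:ℝ) < s := hs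
      simp only [hF, norm_mul]
      congr 1
      rw [Complex.norm_real, Real.norm_eq_abs, abs_of_nonneg (by positivity)]
    rw [setIntegral_congr_fun measurableSet_Ioi this, integral_const_mul, hGamma j, hnormc j]
  have hsum : Summable (fun j : ℕ => ∫ s in Set.Ioi (0:ℝ), ‖F j s‖) := by
    apply Summable.congr (((summable_aux θ hθ m ‖x‖ (norm_nonneg x)).mul_left (a^m)))
    intro j
    rw [hnorm j]
    ring
  have key := integral_tsum_of_summable_integral_norm hF_int hsum
  have hpt : ∀ s ∈ Set.Ioi (0:ℝ),
      wth θ ((s:ℂ) * x) * ((a:ℂ) * (s:ℂ)) ^ m * ((s ^ (θ - 1) * Real.exp (-s) : ℝ) : ℂ)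
        = ∑' j : ℕ, F j s := by
    intro s hs
    have hs0 : (0:ℝ) < s := hs
    rw [wth, mul_assoc, ← tsum_mul_right]
    apply tsum_congr
    intro j
    have hrpow : s ^ (θ + m + j - 1) = s ^ (θ - 1) * s ^ (m + j) := by
      rw [← Real.rpow_natCast s (m + j), ← Real.rpow_add hs0]
      congr 1
      push_cast
      ring
    simp only [hF, hc, hrpow]
    push_cast
    ring
  rw [setIntegral_congr_fun measurableSet_Ioi hpt, ← key]
  apply tsum_congr
  intro j
  simp only [hF]
  have cc : (fun s:ℝ => ((s ^ (θ + ↑m + ↑j - 1) * Real.exp (-s) : ℝ) : ℂ))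
      = fun s:ℝ => @RCLike.ofReal ℂ _ (s ^ (θ + ↑m + ↑j - 1) * Real.exp (-s)) := rfl
  rw [integral_const_mul, cc, integral_ofReal, hGamma j]
  rfl

lemma Ssum (θ : ℝ) (hθ : 0 < θ) (m n : ℕ) :
    ∑ k ∈ Finset.range (n+1), (-1:ℝ)^k / k.factorial
        * (Real.Gamma (θ + m + (n-k : ℕ)) /
            (((n-k : ℕ).factorial : ℝ) * Real.Gamma (θ + (n-k : ℕ))))
      = (m.choose n : ℝ) * pfun (θ + n) (m - n) := by
  rw [← Finset.sum_range_reflect]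
  simp only [Nat.add_sub_cancel]
  have hterm : ∀ j ∈ Finset.range (n+1),
      (-1:ℝ)^(n-j) / (n-j).factorial
        * (Real.Gamma (θ + m + (n-(n-j) : ℕ)) /
            (((n-(n-j) : ℕ).factorial : ℝ) * Real.Gamma (θ + (n-(n-j) : ℕ))))
      = ((-1:ℝ)^(n+j) * (n.choose j) * pfun (θ + j) m) / n.factorial := by
    intro j hj
    have hjn : j ≤ n := Nat.lt_succ_iff.mp (Finset.mem_range.mp hj)
    rw [Nat.sub_sub_self hjn]
    have hΓ : Real.Gamma (θ + m + j) = pfun (θ + j) m * Real.Gamma (θ + j) := by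
      rw [show θ + (m:ℝ) + (j:ℝ) = (θ + j) + m from by ring]
      exact Gamma_pfun (by positivity) m
    rw [hΓ]
    have hΓj : Real.Gamma (θ + j) ≠ 0 := (Real.Gamma_pos_of_pos (by positivity)).ne'
    have hfacts : ((n.choose j : ℝ)) * j.factorial * (n-j).factorial = n.factorial := by
      exact_mod_cast congrArg (Nat.cast : ℕ → ℝ) (Nat.choose_mul_factorial_mul_factorial hjn)
    have hpow : (-1:ℝ)^(n-j) = (-1:ℝ)^(n+j) := by
      rw [show n + j = (n - j) + 2*j from by omega, pow_add, pow_mul]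
      norm_num
    have h1 : ((n-j).factorial : ℝ) ≠ 0 := by exact_mod_cast (Nat.factorial_pos _).ne'
    have h2 : (j.factorial : ℝ) ≠ 0 := by exact_mod_cast (Nat.factorial_pos _).ne'
    have h3 : (n.factorial : ℝ) ≠ 0 := by exact_mod_cast (Nat.factorial_pos _).ne'
    rw [hpow]
    field_simp
    linear_combination (-pfun (θ + j) m) * hfacts
  rw [Finset.sum_congr rfl hterm, ← Finset.sum_div, key_sum m n θ]
  have h3 : (n.factorial : ℝ) ≠ 0 := by exact_mod_cast (Nat.factorial_pos _).ne'
  field_simp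

lemma series_eq (θ : ℝ) (hθ : 0 < θ) (m : ℕ) (x : ℂ) :
    Complex.exp (-x) * (∑' j : ℕ, x ^ j
        * ((Real.Gamma (θ + m + j) / (j.factorial * Real.Gamma (θ + j)) : ℝ) : ℂ))
    = ∑ n ∈ Finset.range (m+1),
        (m.choose n : ℂ) * ((Real.Gamma (θ + m) / Real.Gamma (θ + n) : ℝ) : ℂ) * x ^ n := by
  have hexp : Complex.exp (-x) = ∑' n : ℕ, (-x) ^ n / (n.factorial : ℂ) := by
    rw [Complex.exp_eq_exp_ℂ, NormedSpace.exp_eq_tsum_div]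
  have hf : Summable fun n : ℕ => ‖(-x) ^ n / (n.factorial : ℂ)‖ := by
    refine (Real.summable_pow_div_factorial ‖x‖).congr fun n => ?_
    rw [norm_div, norm_pow, norm_neg]
    norm_num [Complex.norm_natCast]
  have hg : Summable fun j : ℕ => ‖x ^ j
      * ((Real.Gamma (θ + m + j) / (j.factorial * Real.Gamma (θ + j)) : ℝ) : ℂ)‖ := by
    refine (summable_aux θ hθ m ‖x‖ (norm_nonneg x)).congr fun j => ?_
    have h1 : (0:ℝ) < Real.Gamma (θ + j) := Real.Gamma_pos_of_pos (by positivity)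
    have h2 : (0:ℝ) < Real.Gamma (θ + m + j) := Real.Gamma_pos_of_pos (by positivity)
    have h3 : (0:ℝ) < (j.factorial : ℝ) := by exact_mod_cast j.factorial_pos
    rw [norm_mul, norm_pow, Complex.norm_real, Real.norm_eq_abs,
      abs_of_nonneg (by positivity)]
  rw [hexp, tsum_mul_tsum_eq_tsum_sum_range_of_summable_norm hf hg]
  have hinner : ∀ n : ℕ, (∑ k ∈ Finset.range (n+1), ((-x) ^ k / (k.factorial : ℂ))
        * (x ^ (n-k) * ((Real.Gamma (θ + m + (n-k:ℕ)) /
            ((n-k:ℕ).factorial * Real.Gamma (θ + (n-k:ℕ))) : ℝ) : ℂ)))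
      = x ^ n * (((m.choose n : ℝ) * pfun (θ + n) (m - n) : ℝ) : ℂ) := by
    intro n
    have h1 : ∀ k ∈ Finset.range (n+1), ((-x) ^ k / (k.factorial : ℂ))
          * (x ^ (n-k) * ((Real.Gamma (θ + m + (n-k:ℕ)) /
              ((n-k:ℕ).factorial * Real.Gamma (θ + (n-k:ℕ))) : ℝ) : ℂ))
        = x ^ n * (((-1:ℝ)^k / k.factorial * (Real.Gamma (θ + m + (n-k:ℕ)) /
            (((n-k:ℕ).factorial : ℝ) * Real.Gamma (θ + (n-k:ℕ)))) : ℝ) : ℂ) := by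
      intro k hk
      have hkn : k ≤ n := Nat.lt_succ_iff.mp (Finset.mem_range.mp hk)
      have hxp : x ^ (n-k) * x ^ k = x ^ n := by
        rw [← pow_add, Nat.sub_add_cancel hkn]
      rw [neg_pow]
      push_cast
      rw [← hxp]
      ring
    rw [Finset.sum_congr rfl h1, ← Finset.mul_sum]
    congr 1
    exact_mod_cast Ssum θ hθ m n
  rw [tsum_congr hinner]
  rw [tsum_eq_sum (s := Finset.range (m+1)) ?h0]
  case h0 =>
    intro n hn
    have hmn : m < n := by simp [Finset.mem_range] at hn; omega
    rw [Nat.choose_eq_zero_of_lt hmn]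
    simp
  · apply Finset.sum_congr rfl
    intro n hn
    have hnm : n ≤ m := Nat.lt_succ_iff.mp (Finset.mem_range.mp hn)
    have hpf : pfun (θ + n) (m - n) = Real.Gamma (θ + m) / Real.Gamma (θ + n) := by
      have hΓn : Real.Gamma (θ + n) ≠ 0 := (Real.Gamma_pos_of_pos (by positivity)).ne'
      rw [eq_div_iff hΓn]
      have := Gamma_pfun (t := θ + n) (by positivity) (m - n)
      rw [← this]
      congr 1
      push_cast [Nat.cast_sub hnm]
      ring
    rw [hpf]
    push_cast
    ring

theorem stmt13 (θ a : ℝ) (hθ : 0 < θ) (ha : 0 < a) (m : ℕ) (z : ℂ) :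
    Complex.exp (-z / (a : ℂ)) *
      ∫ s in Set.Ioi (0 : ℝ),
        wth θ ((s : ℂ) * z / (a : ℂ)) * ((a : ℂ) * (s : ℂ)) ^ m *
          ((s ^ (θ - 1) * Real.exp (-s) : ℝ) : ℂ)
    = ∑ k ∈ Finset.range (m + 1),
        (a : ℂ) ^ k / (k.factorial : ℂ) * ((gam θ m / gam θ (m - k) : ℝ) : ℂ) *
          z ^ (m - k) := by
  have hane : (a:ℂ) ≠ 0 := Complex.ofReal_ne_zero.mpr ha.ne'
  set x : ℂ := z / a with hx
  have harg : ∀ s : ℝ, (s:ℂ) * z / (a:ℂ) = (s:ℂ) * x := fun s => by rw [hx, mul_div_assoc]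
  have hI : (∫ s in Set.Ioi (0:ℝ), wth θ ((s:ℂ) * z / (a:ℂ)) * ((a:ℂ) * (s:ℂ)) ^ m *
        ((s ^ (θ - 1) * Real.exp (-s) : ℝ) : ℂ))
      = ∫ s in Set.Ioi (0:ℝ), wth θ ((s:ℂ) * x) * ((a:ℂ) * (s:ℂ)) ^ m *
        ((s ^ (θ - 1) * Real.exp (-s) : ℝ) : ℂ) := by
    simp_rw [harg]
  rw [hI, integral_eq θ hθ a ha m x]
  have hpull : (∑' j : ℕ, (x ^ j * (a:ℂ)^m / ((j.factorial : ℂ) * ((Real.Gamma (θ + j) : ℝ):ℂ)))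
        * ((Real.Gamma (θ + m + j) : ℝ) : ℂ))
      = (a:ℂ)^m * ∑' j : ℕ, x ^ j
        * ((Real.Gamma (θ + m + j) / (j.factorial * Real.Gamma (θ + j)) : ℝ) : ℂ) := by
    rw [← tsum_mul_left]
    apply tsum_congr
    intro j
    push_cast
    ring
  rw [hpull]
  have hexp : -z / (a:ℂ) = -x := by rw [hx]; ring
  rw [hexp, ← mul_assoc, mul_comm (Complex.exp (-x)) ((a:ℂ)^m), mul_assoc,
    series_eq θ hθ m x]
  rw [← Finset.sum_range_reflect
    (fun k => (a:ℂ)^k / (k.factorial : ℂ) * ((gam θ m / gam θ (m-k) : ℝ):ℂ) * z^(m-k)) (m+1)]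
  simp only [Nat.add_sub_cancel]
  rw [Finset.mul_sum]
  apply Finset.sum_congr rfl
  intro n hn
  have hnm : n ≤ m := Nat.lt_succ_iff.mp (Finset.mem_range.mp hn)
  have hmmn : m - (m - n) = n := by omega
  rw [hmmn]
  have hΓn : (0:ℝ) < Real.Gamma (θ + n) := Real.Gamma_pos_of_pos (by positivity)
  have hΓnC : ((Real.Gamma (θ + n) : ℝ) : ℂ) ≠ 0 := Complex.ofReal_ne_zero.mpr hΓn.ne'
  have hnf : ((n.factorial : ℕ) : ℂ) ≠ 0 := by exact_mod_cast n.factorial_pos.ne'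
  have hmnf : (((m-n).factorial : ℕ) : ℂ) ≠ 0 := by exact_mod_cast (m-n).factorial_pos.ne'
  have hCC : ((m.choose n : ℂ)) * (n.factorial : ℂ) * ((m-n).factorial : ℂ) = (m.factorial : ℂ) := by
    exact_mod_cast congrArg (Nat.cast : ℕ → ℂ) (Nat.choose_mul_factorial_mul_factorial hnm)
  have hapow : (a:ℂ)^(m-n) * (a:ℂ)^n = (a:ℂ)^m := by
    rw [← pow_add, Nat.sub_add_cancel hnm]
  have hxn : x ^ n = z ^ n / (a:ℂ)^n := by rw [hx, div_pow]
  simp only [gam]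
  rw [hxn]
  push_cast
  rw [← hapow]
  field_simp
  ring_nf
  linear_combination (z^n * ((Real.Gamma (θ+m) : ℝ):ℂ)) * hCC
end

section
/- Norm estimate: let ‖f‖_b = sup_{k∈ℕ₀} b^{−k} |f^{(k)}(0)| for b > 0 and an entire function f. For θ ≥ 0 and a, b > 0 with ab < 1, and for polynomials φ, f, the polynomial g = φ(Δ_θ)f := Σ_k (φ^{(k)}(0)/k!) Δ_θ^k f satisfies ‖g‖_c ≤ (1 − ab)^{−θ} ‖φ‖_a ‖f‖_b, where c = b/(1 − ab). -/
/-- `Δ_θ p = θ p' + z p''` on polynomials. -/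
noncomputable def Dthp (θ : ℝ) (p : Polynomial ℂ) : Polynomial ℂ :=
  (θ : ℂ) • Polynomial.derivative p
    + Polynomial.X * Polynomial.derivative (Polynomial.derivative p)

/-- The norm `‖p‖_b = sup_k b^{-k} |p^{(k)}(0)| = sup_k b^{-k} |k!·coeff k p|`. -/
noncomputable def pnorm (b : ℝ) (p : Polynomial ℂ) : ℝ :=
  ⨆ k : ℕ, b ^ (-(k : ℤ)) * ‖(k.factorial : ℂ) * p.coeff k‖

open Finset Polynomial

/-- Partial binomial series bound: `∑_{k<K} x^k (s)_k / k! ≤ (1-x)^{-s}`. -/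
lemma KI : ∀ (K : ℕ) (s x : ℝ), 0 ≤ s → 0 ≤ x → x < 1 →
    ∑ k ∈ range K, x ^ k * ((∏ j ∈ range k, (s + j)) / k.factorial) ≤ (1 - x) ^ (-s) := by
  intro K
  induction K with
  | zero =>
      intro s x hs hx hx1
      simpa using Real.rpow_nonneg (by linarith : (0:ℝ) ≤ 1 - x) (-s)
  | succ K ih =>
      intro s x hs hx hx1
      set S : ℝ → ℝ := fun y => ∑ k ∈ range (K+1), y ^ k * ((∏ j ∈ range k, (s + j)) / k.factorial) with hS
      set F : ℝ → ℝ := fun y => (1 - y) ^ (-s) - S y with hFdef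
      have hF : ∀ y : ℝ, y < 1 →
          HasDerivAt F (s * (1 - y) ^ (-s - 1)
            - s * ∑ m ∈ range K, y ^ m * ((∏ j ∈ range m, (s + 1 + j)) / m.factorial)) y := by
        intro y hy
        have h1y : (0:ℝ) < 1 - y := by linarith
        have hd1 : HasDerivAt (fun y : ℝ => (1 - y) ^ (-s)) (s * (1 - y) ^ (-s - 1)) y := by
          have hbase : HasDerivAt (fun y : ℝ => 1 - y) (-1) y := (hasDerivAt_id y).const_sub 1
          have := (Real.hasDerivAt_rpow_const (x := 1 - y) (p := -s)
            (Or.inl (ne_of_gt h1y))).comp y hbase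
          exact this.congr_deriv (by ring)
        have hd2 : HasDerivAt S
            (∑ k ∈ range (K+1), ((k : ℝ) * y ^ (k - 1)) * ((∏ j ∈ range k, (s + j)) / k.factorial)) y :=
          HasDerivAt.fun_sum fun k _ => (hasDerivAt_pow k y).mul_const _
        have hsum : (∑ k ∈ range (K+1), ((k : ℝ) * y ^ (k - 1)) * ((∏ j ∈ range k, (s + j)) / k.factorial))
            = s * ∑ m ∈ range K, y ^ m * ((∏ j ∈ range m, (s + 1 + j)) / m.factorial) := by
          rw [Finset.sum_range_succ']
          simp only [Nat.cast_zero, Nat.zero_sub, pow_zero, zero_mul, mul_one, add_zero]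
          rw [Finset.mul_sum]
          refine Finset.sum_congr rfl fun m _ => ?_
          have hprod : ∏ j ∈ range (m+1), (s + j) = (∏ j ∈ range m, (s + 1 + j)) * s := by
            rw [Finset.prod_range_succ']
            simp only [Nat.cast_zero, add_zero]
            congr 1
            exact Finset.prod_congr rfl fun j _ => by push_cast; ring
          rw [hprod]
          have hfac : ((m+1).factorial : ℝ) = (m + 1) * m.factorial := by
            rw [Nat.factorial_succ]; push_cast; ring
          have hm : (m.factorial : ℝ) ≠ 0 := Nat.cast_ne_zero.mpr m.factorial_ne_zero
          rw [hfac]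
          have : ((m + 1 : ℕ) : ℝ) = (m : ℝ) + 1 := by push_cast; ring
          rw [this]
          simp only [Nat.add_sub_cancel]
          field_simp
        rw [hsum] at hd2
        exact hd1.sub hd2
      have hmono : MonotoneOn F (Set.Icc 0 x) := by
        apply monotoneOn_of_deriv_nonneg (convex_Icc 0 x)
        · intro y hy
          exact (hF y (lt_of_le_of_lt hy.2 hx1)).continuousAt.continuousWithinAt
        · intro y hy
          rw [interior_Icc] at hy
          exact (hF y (lt_of_lt_of_le hy.2 (le_of_lt hx1))).differentiableAt.differentiableWithinAt
        · intro y hy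
          rw [interior_Icc] at hy
          have hylt : y < 1 := lt_trans hy.2 hx1
          rw [(hF y hylt).deriv]
          have hIH := ih (s + 1) y (by linarith) (le_of_lt hy.1) hylt
          have : (1 - y) ^ (-(s+1)) = (1 - y) ^ (-s - 1) := by congr 1; ring
          rw [this] at hIH
          have := mul_le_mul_of_nonneg_left hIH hs
          linarith
      have hF0 : F 0 = 0 := by
        have hS0 : S 0 = 1 := by
          show (∑ k ∈ range (K+1), (0:ℝ) ^ k * ((∏ j ∈ range k, (s + j)) / k.factorial)) = 1
          rw [Finset.sum_eq_single 0]
          · simp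
          · intro b _ hb
            simp [zero_pow hb]
          · intro h; simp at h
        simp [hFdef, hS0, Real.one_rpow]
      have := hmono (Set.left_mem_Icc.mpr hx) (Set.right_mem_Icc.mpr hx) hx
      rw [hF0] at this
      simp only [hFdef, S] at this
      linarith

lemma coeff_Dthp (θ : ℝ) (p : Polynomial ℂ) (n : ℕ) :
    (Dthp θ p).coeff n = ((n : ℂ) + 1) * ((θ : ℂ) + n) * p.coeff (n + 1) := by
  cases n with
  | zero => simp [Dthp, coeff_derivative, mul_coeff_zero]
  | succ m =>
      simp [Dthp, coeff_derivative, coeff_X_mul]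
      ring

lemma coeff_iter (θ : ℝ) (p : Polynomial ℂ) (k : ℕ) : ∀ n : ℕ,
    ((Dthp θ)^[k] p).coeff n
      = (∏ j ∈ range k, (((n : ℂ) + j + 1) * ((θ : ℂ) + n + j))) * p.coeff (n + k) := by
  induction k with
  | zero => intro n; simp
  | succ m ih =>
      intro n
      rw [Function.iterate_succ_apply', coeff_Dthp, ih (n + 1),
        show n + 1 + m = n + (m + 1) by ring, prod_range_succ']
      have h : ∏ j ∈ range m, (((n + 1 : ℕ) : ℂ) + j + 1) * ((θ : ℂ) + ((n + 1 : ℕ) : ℂ) + j)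
          = ∏ j ∈ range m, (((n : ℂ) + ((j + 1 : ℕ) : ℂ) + 1) * ((θ : ℂ) + n + ((j + 1 : ℕ) : ℂ))) :=
        Finset.prod_congr rfl (fun j _ => by push_cast; ring)
      rw [h]
      push_cast
      ring

lemma pnormBdd (b : ℝ) (p : Polynomial ℂ) :
    BddAbove (Set.range fun k : ℕ => b ^ (-(k:ℤ)) * ‖(k.factorial:ℂ) * p.coeff k‖) := by
  apply Set.Finite.bddAbove
  apply Set.Finite.subset (Set.Finite.insert 0
    ((Set.finite_Icc 0 p.natDegree).image
      (fun k : ℕ => b ^ (-(k:ℤ)) * ‖(k.factorial:ℂ) * p.coeff k‖)))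
  rintro _ ⟨k, rfl⟩
  by_cases hk : k ≤ p.natDegree
  · exact Set.mem_insert_of_mem _ ⟨k, ⟨Nat.zero_le k, hk⟩, rfl⟩
  · have : p.coeff k = 0 := Polynomial.coeff_eq_zero_of_natDegree_lt (lt_of_not_ge hk)
    simp [this]

lemma pnorm_nonneg' (b : ℝ) (hb : 0 < b) (p : Polynomial ℂ) : 0 ≤ pnorm b p := by
  refine le_trans ?_ (le_ciSup (pnormBdd b p) 0)
  positivity

lemma coeff_abs_le (b : ℝ) (hb : 0 < b) (p : Polynomial ℂ) (k : ℕ) :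
    ‖p.coeff k‖ ≤ pnorm b p * b ^ k / k.factorial := by
  have hterm : b ^ (-(k:ℤ)) * ‖(k.factorial:ℂ) * p.coeff k‖ ≤ pnorm b p :=
    le_ciSup (pnormBdd b p) k
  rw [zpow_neg, zpow_natCast, norm_mul, Complex.norm_natCast] at hterm
  have hbk : (0:ℝ) < b ^ k := pow_pos hb k
  have h2 : (k.factorial:ℝ) * ‖p.coeff k‖ ≤ pnorm b p * b ^ k := by
    calc (k.factorial:ℝ) * ‖p.coeff k‖
        = b ^ k * ((b ^ k)⁻¹ * ((k.factorial:ℝ) * ‖p.coeff k‖)) := by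
          field_simp
      _ ≤ b ^ k * pnorm b p := mul_le_mul_of_nonneg_left hterm hbk.le
      _ = pnorm b p * b ^ k := mul_comm _ _
  rw [le_div_iff₀ (by positivity : (0:ℝ) < (k.factorial:ℝ))]
  linarith [h2, mul_comm (‖p.coeff k‖) ((k.factorial:ℝ))]

lemma fact_prod (n k : ℕ) :
    (n.factorial : ℝ) * ∏ j ∈ range k, ((n:ℝ) + j + 1) = ((n+k).factorial : ℝ) := by
  induction k with
  | zero => simp
  | succ m ih =>
      rw [prod_range_succ, show n + (m+1) = (n+m)+1 from rfl, Nat.factorial_succ]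
      push_cast
      push_cast at ih
      nlinarith [ih]

theorem stmt15 (θ a b : ℝ) (hθ : 0 ≤ θ) (ha : 0 < a) (hb : 0 < b) (hab : a * b < 1)
    (φ f : Polynomial ℂ) :
    pnorm (b / (1 - a * b))
        (∑ k ∈ Finset.range (φ.natDegree + 1), φ.coeff k • (Dthp θ)^[k] f)
      ≤ ((1 - a * b) ^ (-θ) : ℝ) * pnorm a φ * pnorm b f := by
  have hx0 : 0 < a * b := mul_pos ha hb
  have hu : 0 < 1 - a * b := by linarith
  set K := φ.natDegree + 1 with hK
  set g : Polynomial ℂ := ∑ k ∈ Finset.range K, φ.coeff k • (Dthp θ)^[k] f with hg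
  set PA := pnorm a φ with hPA
  set PB := pnorm b f with hPB
  have hPA0 : 0 ≤ PA := pnorm_nonneg' a ha φ
  have hPB0 : 0 ≤ PB := pnorm_nonneg' b hb f
  apply ciSup_le
  intro n
  -- coefficient formula
  have hgcoeff : g.coeff n = ∑ k ∈ range K,
      φ.coeff k * ((∏ j ∈ range k, (((n : ℂ) + j + 1) * ((θ : ℂ) + n + j))) * f.coeff (n + k)) := by
    rw [hg, Polynomial.finset_sum_coeff]
    exact Finset.sum_congr rfl fun k _ => by rw [Polynomial.coeff_smul, coeff_iter, smul_eq_mul]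
  have hCcast : ∀ k : ℕ, ((∏ j ∈ range k, (((n:ℝ) + j + 1) * (θ + (n:ℝ) + j)) : ℝ) : ℂ)
      = ∏ j ∈ range k, (((n : ℂ) + j + 1) * ((θ : ℂ) + n + j)) := by
    intro k
    rw [Complex.ofReal_prod]
    exact Finset.prod_congr rfl fun j _ => by push_cast; ring
  have hCr0 : ∀ k : ℕ, 0 ≤ ∏ j ∈ range k, (((n:ℝ) + j + 1) * (θ + (n:ℝ) + j)) := by
    intro k
    exact Finset.prod_nonneg fun j _ => mul_nonneg (by positivity) (by positivity)
  have hQ0 : ∀ k : ℕ, 0 ≤ ∏ j ∈ range k, (θ + (n:ℝ) + j) := by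
    intro k
    exact Finset.prod_nonneg fun j _ => by positivity
  have hid : ∀ k : ℕ, (n.factorial : ℝ) * ∏ j ∈ range k, (((n:ℝ) + j + 1) * (θ + (n:ℝ) + j))
      = ((n+k).factorial : ℝ) * ∏ j ∈ range k, (θ + (n:ℝ) + j) := by
    intro k
    rw [Finset.prod_mul_distrib, ← mul_assoc, fact_prod]
  -- step 1: abs of coefficient
  have habs : ‖(n.factorial : ℂ) * g.coeff n‖
      ≤ ∑ k ∈ range K, (n.factorial : ℝ) * ‖φ.coeff k‖
          * (∏ j ∈ range k, (((n:ℝ) + j + 1) * (θ + (n:ℝ) + j))) * ‖f.coeff (n + k)‖ := by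
    rw [hgcoeff, Finset.mul_sum]
    refine le_trans (norm_sum_le _ _) (le_of_eq (Finset.sum_congr rfl fun k _ => ?_))
    rw [← hCcast k]
    rw [norm_mul, norm_mul, norm_mul, Complex.norm_natCast, Complex.norm_real,
      Real.norm_of_nonneg (hCr0 k)]
    ring
  -- step 2: termwise bound
  have hterm : ∀ k ∈ range K, (n.factorial : ℝ) * ‖φ.coeff k‖
          * (∏ j ∈ range k, (((n:ℝ) + j + 1) * (θ + (n:ℝ) + j))) * ‖f.coeff (n + k)‖
      ≤ PA * PB * b ^ n * ((a*b) ^ k * ((∏ j ∈ range k, (θ + (n:ℝ) + j)) / k.factorial)) := by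
    intro k _
    have h1 := coeff_abs_le a ha φ k
    have h2 := coeff_abs_le b hb f (n + k)
    calc (n.factorial : ℝ) * ‖φ.coeff k‖
          * (∏ j ∈ range k, (((n:ℝ) + j + 1) * (θ + (n:ℝ) + j))) * ‖f.coeff (n + k)‖
        ≤ (n.factorial : ℝ) * (PA * a ^ k / k.factorial)
          * (∏ j ∈ range k, (((n:ℝ) + j + 1) * (θ + (n:ℝ) + j))) * (PB * b ^ (n+k) / (n+k).factorial) := by
          gcongr
      _ = PA * PB * b ^ n * ((a*b) ^ k * ((∏ j ∈ range k, (θ + (n:ℝ) + j)) / k.factorial)) := by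
          have hn0 : (n.factorial : ℝ) ≠ 0 := Nat.cast_ne_zero.mpr n.factorial_ne_zero
          have hk0 : (k.factorial : ℝ) ≠ 0 := Nat.cast_ne_zero.mpr k.factorial_ne_zero
          have hnk0 : ((n+k).factorial : ℝ) ≠ 0 := Nat.cast_ne_zero.mpr (n+k).factorial_ne_zero
          have hCr_eq : (∏ j ∈ range k, (((n:ℝ) + j + 1) * (θ + (n:ℝ) + j)))
              = ((n+k).factorial : ℝ) * (∏ j ∈ range k, (θ + (n:ℝ) + j)) / (n.factorial : ℝ) := by
            rw [eq_div_iff hn0, mul_comm _ ((n.factorial:ℝ))]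
            exact hid k
          rw [hCr_eq, pow_add, mul_pow]
          field_simp
  -- step 3: sum the bounds and apply KI
  have hsum : ‖(n.factorial : ℂ) * g.coeff n‖
      ≤ PA * PB * b ^ n * ((1 - a*b) ^ (-(θ + (n:ℝ)))) := by
    refine le_trans habs (le_trans (Finset.sum_le_sum hterm) ?_)
    rw [← Finset.mul_sum]
    refine mul_le_mul_of_nonneg_left ?_ (by positivity)
    exact KI K (θ + n) (a*b) (by positivity) hx0.le hab
  -- step 4: multiply by the weight and conclude
  have hcpos : (0:ℝ) < b / (1 - a*b) := by positivity
  have hw : (b / (1 - a*b)) ^ (-(n:ℤ)) = ((1 - a*b) / b) ^ n := by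
    rw [zpow_neg, zpow_natCast, ← inv_pow, inv_div]
  calc (b / (1 - a*b)) ^ (-(n:ℤ)) * ‖(n.factorial : ℂ) * g.coeff n‖
      ≤ (b / (1 - a*b)) ^ (-(n:ℤ)) * (PA * PB * b ^ n * ((1 - a*b) ^ (-(θ + (n:ℝ))))) := by
        refine mul_le_mul_of_nonneg_left hsum ?_
        rw [hw]; positivity
    _ = ((1 - a*b)) ^ (-θ) * PA * PB := by
        rw [hw, div_pow]
        have hbn : (b:ℝ) ^ n ≠ 0 := by positivity
        have hpow : (1 - a*b) ^ n * (1 - a*b) ^ (-(θ + (n:ℝ))) = (1 - a*b) ^ (-θ) := by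
          rw [← Real.rpow_natCast (1 - a*b) n, ← Real.rpow_add hu]
          congr 1
          ring
        field_simp
        rw [← hpow]
        ring
end
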